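/- Let H be the graph constructed from G and ℓ. For any vertex set S ⊆ V ∪ X ∪ Y, S is a target set for H if and only if X ⊆ S, or Y ⊆ S, or S ∩ V is a target set for G. -/

import Mathlib

namespace TSS

variable {V : Type*}

/-- The set of active vertices after `i` steps of the activation process started from `S`. -/
def activeAt (G : SimpleGraph V) (τ : V → ℕ) (S : Set V) : ℕ → Set V
  | 0 => S
  | i + 1 => activeAt G τ S i ∪ { v | τ v ≤ (G.neighborSet v ∩ activeAt G τ S i).ncard }

/-- The active vertex set `𝒜(S) = ⋃ i, 𝒜ⁱ(S)`. -/
def activeSet (G : SimpleGraph V) (τ : V → ℕ) (S : Set V) : Set V :=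
  ⋃ i, activeAt G τ S i

/-- `S` is a target set for `(G, τ)` if it activates every vertex. -/
def IsTargetSet (G : SimpleGraph V) (τ : V → ℕ) (S : Set V) : Prop :=
  activeSet G τ S = Set.univ

/-- Minimum size of a target set. -/
noncomputable def optTS (G : SimpleGraph V) (τ : V → ℕ) : ℕ :=
  sInf { m | ∃ S : Set V, IsTargetSet G τ S ∧ S.ncard = m }

/-- A reconfiguration sequence `Sfam 0 = X, …, Sfam T = Y` of target sets where
consecutive sets differ in exactly one vertex. -/
structure IsReconfSeq (G : SimpleGraph V) (τ : V → ℕ) (X Y : Set V) (T : ℕ)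
    (Sfam : ℕ → Set V) : Prop where
  head : Sfam 0 = X
  last : Sfam T = Y
  target : ∀ t ≤ T, IsTargetSet G τ (Sfam t)
  step : ∀ t < T, (symmDiff (Sfam t) (Sfam (t + 1))).ncard = 1

/-- The size of a reconfiguration sequence: maximum cardinality of any member. -/
noncomputable def seqSize (T : ℕ) (Sfam : ℕ → Set V) : ℕ :=
  (Finset.range (T + 1)).sup fun t => (Sfam t).ncard

/-- `opt_G(X ⇝ Y)`: minimum size over all reconfiguration sequences from `X` to `Y`. -/
noncomputable def optReconf (G : SimpleGraph V) (τ : V → ℕ) (X Y : Set V) : ℕ :=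
  sInf { m | ∃ T Sfam, IsReconfSeq G τ X Y T Sfam ∧ seqSize T Sfam = m }

/-- The four internal vertices of a one-way gadget. -/
inductive GadVert where | t | h | b1 | b2

/-- Index set of the one-way gadgets of the graph `H` built from `G` (with degree
function `d`) and `ℓ`. -/
inductive GadIdx (V : Type*) (ℓ : ℕ) (d : V → ℕ) where
  | vx (v : V) (i : Fin ℓ)
  | xa (i : Fin ℓ) (v : V) (j : Fin (d v))
  | av (v : V) (j : Fin (d v))
  | vy (v : V) (i : Fin ℓ)
  | yb (i : Fin ℓ) (v : V) (j : Fin (d v))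
  | bv (v : V) (j : Fin (d v))

/-- Vertices of the graph `H`: a copy of `V`, the sets `X`, `Y`, `A`, `B`, and the
internal vertices of all one-way gadgets. -/
inductive HVert (V : Type*) (ℓ : ℕ) (d : V → ℕ) where
  | orig (v : V)
  | xx (i : Fin ℓ)
  | yy (i : Fin ℓ)
  | aa (v : V) (j : Fin (d v))
  | bb (v : V) (j : Fin (d v))
  | gad (D : GadIdx V ℓ d) (w : GadVert)

variable {ℓ : ℕ} {d : V → ℕ}

/-- The tail of a one-way gadget. -/
def gadTail : GadIdx V ℓ d → HVert V ℓ d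
  | .vx v _ => .orig v
  | .xa i _ _ => .xx i
  | .av v j => .aa v j
  | .vy v _ => .orig v
  | .yb i _ _ => .yy i
  | .bv v j => .bb v j

/-- The head of a one-way gadget. -/
def gadHead : GadIdx V ℓ d → HVert V ℓ d
  | .vx _ i => .xx i
  | .xa _ v j => .aa v j
  | .av v _ => .orig v
  | .vy _ i => .yy i
  | .yb _ v j => .bb v j
  | .bv v _ => .orig v

/-- Base edge relation of the graph `H`. -/
def HRel (G : SimpleGraph V) (ℓ : ℕ) (d : V → ℕ) : HVert V ℓ d → HVert V ℓ d → Prop :=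
  fun p q =>
    (∃ u v, G.Adj u v ∧ p = .orig u ∧ q = .orig v) ∨
    (∃ D, p = .gad D .t ∧ (q = .gad D .b1 ∨ q = .gad D .b2)) ∨
    (∃ D, p = .gad D .h ∧ (q = .gad D .b1 ∨ q = .gad D .b2)) ∨
    (∃ D, p = gadTail D ∧ q = .gad D .t) ∨
    (∃ D, p = gadHead D ∧ q = .gad D .h)

/-- The graph `H` constructed from `G` (with degree function `d`) and `ℓ`. -/
def graphH (G : SimpleGraph V) (ℓ : ℕ) (d : V → ℕ) : SimpleGraph (HVert V ℓ d) :=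
  SimpleGraph.fromRel (HRel G ℓ d)

/-- The threshold function `τ'` of `H`, where `n` is the number of vertices of `G`. -/
def tauH (τ : V → ℕ) (n ℓ : ℕ) (d : V → ℕ) : HVert V ℓ d → ℕ
  | .orig v => τ v
  | .xx _ => n
  | .yy _ => n
  | .aa _ _ => ℓ
  | .bb _ _ => ℓ
  | .gad _ .t => 1
  | .gad _ .b1 => 1
  | .gad _ .b2 => 1
  | .gad _ .h => 2

/-- The vertex set `X = {x₁, …, x_ℓ}` of `H`. -/
def XSet (V : Type*) (ℓ : ℕ) (d : V → ℕ) : Set (HVert V ℓ d) := Set.range HVert.xx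

/-- The vertex set `Y = {y₁, …, y_ℓ}` of `H`. -/
def YSet (V : Type*) (ℓ : ℕ) (d : V → ℕ) : Set (HVert V ℓ d) := Set.range HVert.yy

/-- The copy of `V` inside `V(H)`. -/
def OrigSet (V : Type*) (ℓ : ℕ) (d : V → ℕ) : Set (HVert V ℓ d) := Set.range HVert.orig

/-- The vertex set `A = {a_{v,j}}` of `H`. -/
def ASet (V : Type*) (ℓ : ℕ) (d : V → ℕ) : Set (HVert V ℓ d) :=
  { p | ∃ v j, p = HVert.aa v j }

/-- The vertex set `B = {b_{v,j}}` of `H`. -/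
def BSet (V : Type*) (ℓ : ℕ) (d : V → ℕ) : Set (HVert V ℓ d) :=
  { p | ∃ v j, p = HVert.bb v j }


theorem activeAt_mono (G : SimpleGraph V) (τ : V → ℕ) (S : Set V) :
    Monotone (activeAt G τ S) := by
  apply monotone_nat_of_le_succ
  intro i
  exact fun v hv => Or.inl hv

theorem activeAt_subset_activeSet (G : SimpleGraph V) (τ : V → ℕ) (S : Set V) (i : ℕ) :
    activeAt G τ S i ⊆ activeSet G τ S :=
  Set.subset_iUnion (activeAt G τ S) i

theorem mem_activeAt_succ {G : SimpleGraph V} {τ : V → ℕ} {S : Set V} {i : ℕ} {v : V}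
    (h : τ v ≤ (G.neighborSet v ∩ activeAt G τ S i).ncard) :
    v ∈ activeAt G τ S (i + 1) := Or.inr h

theorem mem_activeAt_succ_of_subset [Finite V] {G : SimpleGraph V} {τ : V → ℕ} {S : Set V}
    {i : ℕ} {v : V} {F : Set V} (hF : F ⊆ G.neighborSet v ∩ activeAt G τ S i)
    (hcard : τ v ≤ F.ncard) : v ∈ activeAt G τ S (i + 1) :=
  mem_activeAt_succ (le_trans hcard (Set.ncard_le_ncard hF (Set.toFinite _)))

theorem exists_stage {G : SimpleGraph V} {τ : V → ℕ} {S : Set V} {F : Set V}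
    (hF : F.Finite) (h : F ⊆ activeSet G τ S) : ∃ i, F ⊆ activeAt G τ S i := by
  refine Set.Finite.induction_on
    (motive := fun F _ => F ⊆ activeSet G τ S → ∃ i, F ⊆ activeAt G τ S i) F hF
    (fun _ => ⟨0, by simp⟩) ?_ h
  intro a s _ _ ih hsub
  obtain ⟨i, hi⟩ := ih (fun q hq => hsub (Set.mem_insert_of_mem _ hq))
  obtain ⟨j, hj⟩ := Set.mem_iUnion.mp (hsub (Set.mem_insert _ _))
  exact ⟨max i j, Set.insert_subset
    (activeAt_mono G τ S (le_max_right i j) hj)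
    (hi.trans (activeAt_mono G τ S (le_max_left i j)))⟩

theorem activeSet_closed [Finite V] {G : SimpleGraph V} {τ : V → ℕ} {S : Set V} {v : V}
    (h : τ v ≤ (G.neighborSet v ∩ activeSet G τ S).ncard) : v ∈ activeSet G τ S := by
  obtain ⟨i, hi⟩ := exists_stage (Set.toFinite (G.neighborSet v ∩ activeSet G τ S))
    (fun q hq => hq.2)
  refine activeAt_subset_activeSet G τ S (i + 1) (mem_activeAt_succ ?_)
  refine le_trans h (le_of_eq ?_)
  congr 1
  refine Set.Subset.antisymm (fun q hq => ⟨hq.1, hi hq⟩)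
    (fun q hq => ⟨hq.1, activeAt_subset_activeSet G τ S i hq.2⟩)

theorem target_exists_stage [Finite V] {G : SimpleGraph V} {τ : V → ℕ} {S : Set V}
    (h : IsTargetSet G τ S) : ∃ i, ∀ v, v ∈ activeAt G τ S i := by
  obtain ⟨i, hi⟩ := exists_stage (Set.finite_univ (α := V))
    (show Set.univ ⊆ activeSet G τ S from
      (show activeSet G τ S = Set.univ from h).symm.subset)
  exact ⟨i, fun v => hi (Set.mem_univ v)⟩

variable {ℓ : ℕ} {d : V → ℕ}

instance : Finite GadVert :=
  Finite.of_surjective (fun k : Fin 4 =>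
    match k with | 0 => GadVert.t | 1 => .h | 2 => .b1 | 3 => .b2)
    (by intro w; cases w
        · exact ⟨0, rfl⟩
        · exact ⟨1, rfl⟩
        · exact ⟨2, rfl⟩
        · exact ⟨3, rfl⟩)

instance [Finite V] : Finite (GadIdx V ℓ d) :=
  Finite.of_surjective (fun z : (V × Fin ℓ) ⊕ (Fin ℓ × Σ v : V, Fin (d v)) ⊕ (Σ v : V, Fin (d v)) ⊕ (V × Fin ℓ) ⊕ (Fin ℓ × Σ v : V, Fin (d v)) ⊕ (Σ v : V, Fin (d v)) =>
    match z with
    | .inl (v, i) => GadIdx.vx v i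
    | .inr (.inl (i, ⟨v, j⟩)) => .xa i v j
    | .inr (.inr (.inl ⟨v, j⟩)) => .av v j
    | .inr (.inr (.inr (.inl (v, i)))) => .vy v i
    | .inr (.inr (.inr (.inr (.inl (i, ⟨v, j⟩))))) => .yb i v j
    | .inr (.inr (.inr (.inr (.inr ⟨v, j⟩)))) => .bv v j)
    (by intro D; cases D with
        | vx v i => exact ⟨.inl (v, i), rfl⟩
        | xa i v j => exact ⟨.inr (.inl (i, ⟨v, j⟩)), rfl⟩
        | av v j => exact ⟨.inr (.inr (.inl ⟨v, j⟩)), rfl⟩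
        | vy v i => exact ⟨.inr (.inr (.inr (.inl (v, i)))), rfl⟩
        | yb i v j => exact ⟨.inr (.inr (.inr (.inr (.inl (i, ⟨v, j⟩))))), rfl⟩
        | bv v j => exact ⟨.inr (.inr (.inr (.inr (.inr ⟨v, j⟩)))), rfl⟩)

instance [Finite V] : Finite (HVert V ℓ d) :=
  Finite.of_surjective (fun z : V ⊕ Fin ℓ ⊕ Fin ℓ ⊕ (Σ v : V, Fin (d v)) ⊕ (Σ v : V, Fin (d v)) ⊕ (GadIdx V ℓ d × GadVert) =>
    match z with
    | .inl v => HVert.orig v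
    | .inr (.inl i) => .xx i
    | .inr (.inr (.inl i)) => .yy i
    | .inr (.inr (.inr (.inl ⟨v, j⟩))) => .aa v j
    | .inr (.inr (.inr (.inr (.inl ⟨v, j⟩)))) => .bb v j
    | .inr (.inr (.inr (.inr (.inr (D, w))))) => .gad D w)
    (by intro p; cases p with
        | orig v => exact ⟨.inl v, rfl⟩
        | xx i => exact ⟨.inr (.inl i), rfl⟩
        | yy i => exact ⟨.inr (.inr (.inl i)), rfl⟩
        | aa v j => exact ⟨.inr (.inr (.inr (.inl ⟨v, j⟩))), rfl⟩
        | bb v j => exact ⟨.inr (.inr (.inr (.inr (.inl ⟨v, j⟩)))), rfl⟩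
        | gad D w => exact ⟨.inr (.inr (.inr (.inr (.inr (D, w))))), rfl⟩)

section Adj
variable (G : SimpleGraph V)

lemma gadTail_ne_gad (D D' : GadIdx V ℓ d) (w : GadVert) :
    gadTail D ≠ HVert.gad D' w := by cases D <;> simp [gadTail]

lemma gadHead_ne_gad (D D' : GadIdx V ℓ d) (w : GadVert) :
    gadHead D ≠ HVert.gad D' w := by cases D <;> simp [gadHead]

lemma adj_orig {u v : V} (h : G.Adj u v) :
    (graphH G ℓ d).Adj (.orig u) (.orig v) := by
  rw [graphH, SimpleGraph.fromRel_adj]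
  exact ⟨by simp [h.ne], Or.inl (Or.inl ⟨u, v, h, rfl, rfl⟩)⟩

lemma adj_tail_t (D : GadIdx V ℓ d) :
    (graphH G ℓ d).Adj (gadTail D) (.gad D .t) := by
  rw [graphH, SimpleGraph.fromRel_adj]
  exact ⟨gadTail_ne_gad D D .t,
    Or.inl (Or.inr (Or.inr (Or.inr (Or.inl ⟨D, rfl, rfl⟩))))⟩

lemma adj_head_h (D : GadIdx V ℓ d) :
    (graphH G ℓ d).Adj (gadHead D) (.gad D .h) := by
  rw [graphH, SimpleGraph.fromRel_adj]
  exact ⟨gadHead_ne_gad D D .h,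
    Or.inl (Or.inr (Or.inr (Or.inr (Or.inr ⟨D, rfl, rfl⟩))))⟩

lemma adj_t_b1 (D : GadIdx V ℓ d) :
    (graphH G ℓ d).Adj (.gad D .t) (.gad D .b1) := by
  rw [graphH, SimpleGraph.fromRel_adj]
  exact ⟨by simp, Or.inl (Or.inr (Or.inl ⟨D, rfl, Or.inl rfl⟩))⟩

lemma adj_t_b2 (D : GadIdx V ℓ d) :
    (graphH G ℓ d).Adj (.gad D .t) (.gad D .b2) := by
  rw [graphH, SimpleGraph.fromRel_adj]
  exact ⟨by simp, Or.inl (Or.inr (Or.inl ⟨D, rfl, Or.inr rfl⟩))⟩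

lemma adj_h_b1 (D : GadIdx V ℓ d) :
    (graphH G ℓ d).Adj (.gad D .h) (.gad D .b1) := by
  rw [graphH, SimpleGraph.fromRel_adj]
  exact ⟨by simp, Or.inl (Or.inr (Or.inr (Or.inl ⟨D, rfl, Or.inl rfl⟩)))⟩

lemma adj_h_b2 (D : GadIdx V ℓ d) :
    (graphH G ℓ d).Adj (.gad D .h) (.gad D .b2) := by
  rw [graphH, SimpleGraph.fromRel_adj]
  exact ⟨by simp, Or.inl (Or.inr (Or.inr (Or.inl ⟨D, rfl, Or.inr rfl⟩)))⟩

lemma adj_cases {p q : HVert V ℓ d} (h : (graphH G ℓ d).Adj p q) :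
    (∃ u v, G.Adj u v ∧ p = .orig u ∧ q = .orig v) ∨
    (∃ D, p = .gad D .t ∧ (q = .gad D .b1 ∨ q = .gad D .b2)) ∨
    (∃ D, q = .gad D .t ∧ (p = .gad D .b1 ∨ p = .gad D .b2)) ∨
    (∃ D, p = .gad D .h ∧ (q = .gad D .b1 ∨ q = .gad D .b2)) ∨
    (∃ D, q = .gad D .h ∧ (p = .gad D .b1 ∨ p = .gad D .b2)) ∨
    (∃ D, p = gadTail D ∧ q = .gad D .t) ∨
    (∃ D, q = gadTail D ∧ p = .gad D .t) ∨
    (∃ D, p = gadHead D ∧ q = .gad D .h) ∨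
    (∃ D, q = gadHead D ∧ p = .gad D .h) := by
  rw [graphH, SimpleGraph.fromRel_adj] at h
  obtain ⟨-, h | h⟩ := h <;> rw [HRel] at h
  · rcases h with ⟨u, v, ha, h1, h2⟩ | ⟨D, h1, h2⟩ | ⟨D, h1, h2⟩ | ⟨D, h1, h2⟩ | ⟨D, h1, h2⟩
    · exact Or.inl ⟨u, v, ha, h1, h2⟩
    · exact Or.inr (Or.inl ⟨D, h1, h2⟩)
    · exact Or.inr (Or.inr (Or.inr (Or.inl ⟨D, h1, h2⟩)))
    · exact Or.inr (Or.inr (Or.inr (Or.inr (Or.inr (Or.inl ⟨D, h1, h2⟩)))))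
    · exact Or.inr (Or.inr (Or.inr (Or.inr (Or.inr (Or.inr (Or.inr (Or.inl ⟨D, h1, h2⟩)))))))
  · rcases h with ⟨u, v, ha, h1, h2⟩ | ⟨D, h1, h2⟩ | ⟨D, h1, h2⟩ | ⟨D, h1, h2⟩ | ⟨D, h1, h2⟩
    · exact Or.inl ⟨v, u, ha.symm, h2, h1⟩
    · exact Or.inr (Or.inr (Or.inl ⟨D, h1, h2⟩))
    · exact Or.inr (Or.inr (Or.inr (Or.inr (Or.inl ⟨D, h1, h2⟩))))
    · exact Or.inr (Or.inr (Or.inr (Or.inr (Or.inr (Or.inr (Or.inl ⟨D, h1, h2⟩))))))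
    · exact Or.inr (Or.inr (Or.inr (Or.inr (Or.inr (Or.inr (Or.inr (Or.inr ⟨D, h1, h2⟩)))))))

end Adj

section Inv
variable (G : SimpleGraph V)

lemma adj_orig_inv {v : V} {q : HVert V ℓ d}
    (h : (graphH G ℓ d).Adj (.orig v) q) :
    (∃ u, G.Adj v u ∧ q = .orig u) ∨ (∃ i, q = .gad (.vx v i) .t) ∨
    (∃ i, q = .gad (.vy v i) .t) ∨ (∃ j, q = .gad (.av v j) .h) ∨
    (∃ j, q = .gad (.bv v j) .h) := by
  rcases adj_cases G h with ⟨u, u', ha, h1, h2⟩ | ⟨D, h1, h2⟩ | ⟨D, h1, h2⟩ |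
    ⟨D, h1, h2⟩ | ⟨D, h1, h2⟩ | ⟨D, h1, h2⟩ | ⟨D, h1, h2⟩ | ⟨D, h1, h2⟩ | ⟨D, h1, h2⟩
  · obtain rfl : v = u := by simpa using h1
    exact Or.inl ⟨u', ha, h2⟩
  · simp at h1
  · simp at h2
  · simp at h1
  · simp at h2
  · cases D with
    | vx v' i =>
        obtain rfl : v = v' := by simpa [gadTail] using h1
        exact Or.inr (Or.inl ⟨i, h2⟩)
    | vy v' i =>
        obtain rfl : v = v' := by simpa [gadTail] using h1
        exact Or.inr (Or.inr (Or.inl ⟨i, h2⟩))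
    | xa i v' j => simp [gadTail] at h1
    | av v' j => simp [gadTail] at h1
    | yb i v' j => simp [gadTail] at h1
    | bv v' j => simp [gadTail] at h1
  · simp at h2
  · cases D with
    | av v' j =>
        obtain rfl : v = v' := by simpa [gadHead] using h1
        exact Or.inr (Or.inr (Or.inr (Or.inl ⟨j, h2⟩)))
    | bv v' j =>
        obtain rfl : v = v' := by simpa [gadHead] using h1
        exact Or.inr (Or.inr (Or.inr (Or.inr ⟨j, h2⟩)))
    | vx v' i => simp [gadHead] at h1
    | vy v' i => simp [gadHead] at h1
    | xa i v' j => simp [gadHead] at h1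
    | yb i v' j => simp [gadHead] at h1
  · simp at h2

lemma adj_xx_inv {i : Fin ℓ} {q : HVert V ℓ d}
    (h : (graphH G ℓ d).Adj (.xx i) q) :
    (∃ v, q = .gad (.vx v i) .h) ∨ (∃ v j, q = .gad (.xa i v j) .t) := by
  rcases adj_cases G h with ⟨u, u', ha, h1, h2⟩ | ⟨D, h1, h2⟩ | ⟨D, h1, h2⟩ |
    ⟨D, h1, h2⟩ | ⟨D, h1, h2⟩ | ⟨D, h1, h2⟩ | ⟨D, h1, h2⟩ | ⟨D, h1, h2⟩ | ⟨D, h1, h2⟩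
  · simp at h1
  · simp at h1
  · simp at h2
  · simp at h1
  · simp at h2
  · cases D with
    | xa i' v j =>
        obtain rfl : i = i' := by simpa [gadTail] using h1
        exact Or.inr ⟨v, j, h2⟩
    | vx v' i' => simp [gadTail] at h1
    | vy v' i' => simp [gadTail] at h1
    | av v' j => simp [gadTail] at h1
    | yb i' v' j => simp [gadTail] at h1
    | bv v' j => simp [gadTail] at h1
  · simp at h2
  · cases D with
    | vx v i' =>
        obtain rfl : i = i' := by simpa [gadHead] using h1
        exact Or.inl ⟨v, h2⟩
    | vy v' i' => simp [gadHead] at h1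
    | xa i' v' j => simp [gadHead] at h1
    | av v' j => simp [gadHead] at h1
    | yb i' v' j => simp [gadHead] at h1
    | bv v' j => simp [gadHead] at h1
  · simp at h2

lemma adj_yy_inv {i : Fin ℓ} {q : HVert V ℓ d}
    (h : (graphH G ℓ d).Adj (.yy i) q) :
    (∃ v, q = .gad (.vy v i) .h) ∨ (∃ v j, q = .gad (.yb i v j) .t) := by
  rcases adj_cases G h with ⟨u, u', ha, h1, h2⟩ | ⟨D, h1, h2⟩ | ⟨D, h1, h2⟩ |
    ⟨D, h1, h2⟩ | ⟨D, h1, h2⟩ | ⟨D, h1, h2⟩ | ⟨D, h1, h2⟩ | ⟨D, h1, h2⟩ | ⟨D, h1, h2⟩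
  · simp at h1
  · simp at h1
  · simp at h2
  · simp at h1
  · simp at h2
  · cases D with
    | yb i' v j =>
        obtain rfl : i = i' := by simpa [gadTail] using h1
        exact Or.inr ⟨v, j, h2⟩
    | vx v' i' => simp [gadTail] at h1
    | vy v' i' => simp [gadTail] at h1
    | av v' j => simp [gadTail] at h1
    | xa i' v' j => simp [gadTail] at h1
    | bv v' j => simp [gadTail] at h1
  · simp at h2
  · cases D with
    | vy v i' =>
        obtain rfl : i = i' := by simpa [gadHead] using h1
        exact Or.inl ⟨v, h2⟩
    | vx v' i' => simp [gadHead] at h1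
    | xa i' v' j => simp [gadHead] at h1
    | av v' j => simp [gadHead] at h1
    | yb i' v' j => simp [gadHead] at h1
    | bv v' j => simp [gadHead] at h1
  · simp at h2

lemma adj_aa_inv {v : V} {j : Fin (d v)} {q : HVert V ℓ d}
    (h : (graphH G ℓ d).Adj (.aa v j) q) :
    q = .gad (.av v j) .t ∨ ∃ i, q = .gad (.xa i v j) .h := by
  rcases adj_cases G h with ⟨u, u', ha, h1, h2⟩ | ⟨D, h1, h2⟩ | ⟨D, h1, h2⟩ |
    ⟨D, h1, h2⟩ | ⟨D, h1, h2⟩ | ⟨D, h1, h2⟩ | ⟨D, h1, h2⟩ | ⟨D, h1, h2⟩ | ⟨D, h1, h2⟩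
  · simp at h1
  · simp at h1
  · simp at h2
  · simp at h1
  · simp at h2
  · cases D with
    | av v' j' =>
        obtain ⟨rfl, hj⟩ : v = v' ∧ HEq j j' := by simpa [gadTail] using h1
        obtain rfl := eq_of_heq hj
        exact Or.inl h2
    | vx v' i' => simp [gadTail] at h1
    | vy v' i' => simp [gadTail] at h1
    | xa i' v' j' => simp [gadTail] at h1
    | yb i' v' j' => simp [gadTail] at h1
    | bv v' j' => simp [gadTail] at h1
  · simp at h2
  · cases D with
    | xa i v' j' =>
        obtain ⟨rfl, hj⟩ : v = v' ∧ HEq j j' := by simpa [gadHead] using h1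
        obtain rfl := eq_of_heq hj
        exact Or.inr ⟨i, h2⟩
    | vx v' i' => simp [gadHead] at h1
    | vy v' i' => simp [gadHead] at h1
    | av v' j' => simp [gadHead] at h1
    | yb i' v' j' => simp [gadHead] at h1
    | bv v' j' => simp [gadHead] at h1
  · simp at h2

lemma adj_bb_inv {v : V} {j : Fin (d v)} {q : HVert V ℓ d}
    (h : (graphH G ℓ d).Adj (.bb v j) q) :
    q = .gad (.bv v j) .t ∨ ∃ i, q = .gad (.yb i v j) .h := by
  rcases adj_cases G h with ⟨u, u', ha, h1, h2⟩ | ⟨D, h1, h2⟩ | ⟨D, h1, h2⟩ |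
    ⟨D, h1, h2⟩ | ⟨D, h1, h2⟩ | ⟨D, h1, h2⟩ | ⟨D, h1, h2⟩ | ⟨D, h1, h2⟩ | ⟨D, h1, h2⟩
  · simp at h1
  · simp at h1
  · simp at h2
  · simp at h1
  · simp at h2
  · cases D with
    | bv v' j' =>
        obtain ⟨rfl, hj⟩ : v = v' ∧ HEq j j' := by simpa [gadTail] using h1
        obtain rfl := eq_of_heq hj
        exact Or.inl h2
    | vx v' i' => simp [gadTail] at h1
    | vy v' i' => simp [gadTail] at h1
    | xa i' v' j' => simp [gadTail] at h1
    | yb i' v' j' => simp [gadTail] at h1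
    | av v' j' => simp [gadTail] at h1
  · simp at h2
  · cases D with
    | yb i v' j' =>
        obtain ⟨rfl, hj⟩ : v = v' ∧ HEq j j' := by simpa [gadHead] using h1
        obtain rfl := eq_of_heq hj
        exact Or.inr ⟨i, h2⟩
    | vx v' i' => simp [gadHead] at h1
    | vy v' i' => simp [gadHead] at h1
    | av v' j' => simp [gadHead] at h1
    | xa i' v' j' => simp [gadHead] at h1
    | bv v' j' => simp [gadHead] at h1
  · simp at h2

lemma adj_t_inv {D : GadIdx V ℓ d} {q : HVert V ℓ d}
    (h : (graphH G ℓ d).Adj (.gad D .t) q) :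
    q = gadTail D ∨ q = .gad D .b1 ∨ q = .gad D .b2 := by
  rcases adj_cases G h with ⟨u, u', ha, h1, h2⟩ | ⟨D', h1, h2⟩ | ⟨D', h1, h2⟩ |
    ⟨D', h1, h2⟩ | ⟨D', h1, h2⟩ | ⟨D', h1, h2⟩ | ⟨D', h1, h2⟩ | ⟨D', h1, h2⟩ | ⟨D', h1, h2⟩
  · simp at h1
  · obtain rfl : D = D' := by simpa using h1
    exact Or.inr h2
  · simp at h2
  · simp at h1
  · simp at h2
  · exact absurd h1.symm (gadTail_ne_gad D' D .t)
  · obtain rfl : D = D' := by simpa using h2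
    exact Or.inl h1
  · exact absurd h1.symm (gadHead_ne_gad D' D .t)
  · simp at h2

lemma adj_b1_inv {D : GadIdx V ℓ d} {q : HVert V ℓ d}
    (h : (graphH G ℓ d).Adj (.gad D .b1) q) :
    q = .gad D .t ∨ q = .gad D .h := by
  rcases adj_cases G h with ⟨u, u', ha, h1, h2⟩ | ⟨D', h1, h2⟩ | ⟨D', h1, h2⟩ |
    ⟨D', h1, h2⟩ | ⟨D', h1, h2⟩ | ⟨D', h1, h2⟩ | ⟨D', h1, h2⟩ | ⟨D', h1, h2⟩ | ⟨D', h1, h2⟩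
  · simp at h1
  · simp at h1
  · rcases h2 with h2 | h2
    · obtain rfl : D = D' := by simpa using h2
      exact Or.inl h1
    · simp at h2
  · simp at h1
  · rcases h2 with h2 | h2
    · obtain rfl : D = D' := by simpa using h2
      exact Or.inr h1
    · simp at h2
  · exact absurd h1.symm (gadTail_ne_gad D' D .b1)
  · simp at h2
  · exact absurd h1.symm (gadHead_ne_gad D' D .b1)
  · simp at h2

lemma adj_b2_inv {D : GadIdx V ℓ d} {q : HVert V ℓ d}
    (h : (graphH G ℓ d).Adj (.gad D .b2) q) :
    q = .gad D .t ∨ q = .gad D .h := by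
  rcases adj_cases G h with ⟨u, u', ha, h1, h2⟩ | ⟨D', h1, h2⟩ | ⟨D', h1, h2⟩ |
    ⟨D', h1, h2⟩ | ⟨D', h1, h2⟩ | ⟨D', h1, h2⟩ | ⟨D', h1, h2⟩ | ⟨D', h1, h2⟩ | ⟨D', h1, h2⟩
  · simp at h1
  · simp at h1
  · rcases h2 with h2 | h2
    · simp at h2
    · obtain rfl : D = D' := by simpa using h2
      exact Or.inl h1
  · simp at h1
  · rcases h2 with h2 | h2
    · simp at h2
    · obtain rfl : D = D' := by simpa using h2
      exact Or.inr h1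
  · exact absurd h1.symm (gadTail_ne_gad D' D .b2)
  · simp at h2
  · exact absurd h1.symm (gadHead_ne_gad D' D .b2)
  · simp at h2

lemma adj_h_inv {D : GadIdx V ℓ d} {q : HVert V ℓ d}
    (h : (graphH G ℓ d).Adj (.gad D .h) q) :
    q = gadHead D ∨ q = .gad D .b1 ∨ q = .gad D .b2 := by
  rcases adj_cases G h with ⟨u, u', ha, h1, h2⟩ | ⟨D', h1, h2⟩ | ⟨D', h1, h2⟩ |
    ⟨D', h1, h2⟩ | ⟨D', h1, h2⟩ | ⟨D', h1, h2⟩ | ⟨D', h1, h2⟩ | ⟨D', h1, h2⟩ | ⟨D', h1, h2⟩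
  · simp at h1
  · simp at h1
  · simp at h2
  · obtain rfl : D = D' := by simpa using h1
    exact Or.inr h2
  · simp at h2
  · exact absurd h1.symm (gadTail_ne_gad D' D .h)
  · simp at h2
  · exact absurd h1.symm (gadHead_ne_gad D' D .h)
  · obtain rfl : D = D' := by simpa using h2
    exact Or.inl h1

end Inv

/-- Tail condition for gadget indices. -/
def tailOK (Act : Set V) (SX SY : Set (Fin ℓ)) : GadIdx V ℓ d → Prop
  | .vx v _ => v ∈ Act
  | .xa i _ _ => i ∈ SX
  | .av _ _ => False
  | .vy v _ => v ∈ Act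
  | .yb i _ _ => i ∈ SY
  | .bv _ _ => False

/-- The invariant superset of the active set in the reverse direction. -/
def Wset (Act : Set V) (SX SY : Set (Fin ℓ)) : Set (HVert V ℓ d) :=
  fun p => match p with
  | .orig v => v ∈ Act
  | .xx i => i ∈ SX
  | .yy i => i ∈ SY
  | .aa _ _ => False
  | .bb _ _ => False
  | .gad D _ => tailOK Act SX SY D

lemma mem_Wset_gadTail {Act : Set V} {SX SY : Set (Fin ℓ)} {D : GadIdx V ℓ d} :
    gadTail D ∈ Wset Act SX SY ↔ tailOK Act SX SY D := by
  cases D <;> rfl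

lemma Wset_closed [Fintype V] (G : SimpleGraph V) (τ : V → ℕ) (Act : Set V)
    (SX SY : Set (Fin ℓ))
    (hAct : ∀ v, τ v ≤ (G.neighborSet v ∩ Act).ncard → v ∈ Act)
    (hActne : Act ≠ Set.univ) (hSX : SX ≠ Set.univ) (hSY : SY ≠ Set.univ)
    (p : HVert V ℓ d)
    (hp : tauH τ (Fintype.card V) ℓ d p ≤
      ((graphH G ℓ d).neighborSet p ∩ Wset Act SX SY).ncard) :
    p ∈ Wset Act SX SY := by
  have hActlt : Act.ncard < Fintype.card V := by
    have := Set.ncard_lt_ncard (Set.ssubset_univ_iff.mpr hActne) Set.finite_univ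
    rwa [Set.ncard_univ, Nat.card_eq_fintype_card] at this
  cases p with
  | orig v =>
      by_cases hv : v ∈ Act
      · exact hv
      · apply hAct
        have hsub : (graphH G ℓ d).neighborSet (.orig v) ∩ Wset Act SX SY ⊆
            HVert.orig '' (G.neighborSet v ∩ Act) := by
          rintro q ⟨hq, hqW⟩
          rcases adj_orig_inv G hq with ⟨u, ha, rfl⟩ | ⟨i, rfl⟩ | ⟨i, rfl⟩ |
            ⟨j, rfl⟩ | ⟨j, rfl⟩
          · exact ⟨u, ⟨ha, hqW⟩, rfl⟩
          · exact absurd hqW hv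
          · exact absurd hqW hv
          · exact absurd hqW not_false
          · exact absurd hqW not_false
        calc τ v ≤ _ := hp
          _ ≤ (HVert.orig '' (G.neighborSet v ∩ Act)).ncard :=
            Set.ncard_le_ncard hsub (Set.toFinite _)
          _ = (G.neighborSet v ∩ Act).ncard :=
            Set.ncard_image_of_injective _ (fun a b hab => by simpa using hab)
  | xx k =>
      by_cases hk : k ∈ SX
      · exact hk
      · exfalso
        have hsub : (graphH G ℓ d).neighborSet (.xx k) ∩ Wset Act SX SY ⊆
            (fun v => HVert.gad (.vx v k) .h) '' Act := by
          rintro q ⟨hq, hqW⟩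
          rcases adj_xx_inv G hq with ⟨v, rfl⟩ | ⟨v, j, rfl⟩
          · exact ⟨v, hqW, rfl⟩
          · exact absurd hqW hk
        have : Fintype.card V ≤ Act.ncard := by
          calc Fintype.card V ≤ _ := hp
            _ ≤ ((fun v => HVert.gad (.vx v k) .h) '' Act).ncard :=
              Set.ncard_le_ncard hsub (Set.toFinite _)
            _ = Act.ncard :=
              Set.ncard_image_of_injective _ (fun a b hab => by simpa using hab)
        omega
  | yy k =>
      by_cases hk : k ∈ SY
      · exact hk
      · exfalso
        have hsub : (graphH G ℓ d).neighborSet (.yy k) ∩ Wset Act SX SY ⊆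
            (fun v => HVert.gad (.vy v k) .h) '' Act := by
          rintro q ⟨hq, hqW⟩
          rcases adj_yy_inv G hq with ⟨v, rfl⟩ | ⟨v, j, rfl⟩
          · exact ⟨v, hqW, rfl⟩
          · exact absurd hqW hk
        have : Fintype.card V ≤ Act.ncard := by
          calc Fintype.card V ≤ _ := hp
            _ ≤ ((fun v => HVert.gad (.vy v k) .h) '' Act).ncard :=
              Set.ncard_le_ncard hsub (Set.toFinite _)
            _ = Act.ncard :=
              Set.ncard_image_of_injective _ (fun a b hab => by simpa using hab)
        omega
  | aa v j =>
      have hSXlt : SX.ncard < ℓ := by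
        have := Set.ncard_lt_ncard (Set.ssubset_univ_iff.mpr hSX) Set.finite_univ
        simpa [Set.ncard_univ] using this
      have hsub : (graphH G ℓ d).neighborSet (.aa v j) ∩ Wset Act SX SY ⊆
          (fun k => HVert.gad (.xa k v j) .h) '' SX := by
        rintro q ⟨hq, hqW⟩
        rcases adj_aa_inv G hq with rfl | ⟨k, rfl⟩
        · exact absurd hqW not_false
        · exact ⟨k, hqW, rfl⟩
      have : ℓ ≤ SX.ncard := by
        calc ℓ ≤ _ := hp
          _ ≤ ((fun k => HVert.gad (.xa k v j) .h) '' SX).ncard :=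
            Set.ncard_le_ncard hsub (Set.toFinite _)
          _ = SX.ncard :=
            Set.ncard_image_of_injective _ (fun a b hab => by simpa using hab)
      omega
  | bb v j =>
      have hSYlt : SY.ncard < ℓ := by
        have := Set.ncard_lt_ncard (Set.ssubset_univ_iff.mpr hSY) Set.finite_univ
        simpa [Set.ncard_univ] using this
      have hsub : (graphH G ℓ d).neighborSet (.bb v j) ∩ Wset Act SX SY ⊆
          (fun k => HVert.gad (.yb k v j) .h) '' SY := by
        rintro q ⟨hq, hqW⟩
        rcases adj_bb_inv G hq with rfl | ⟨k, rfl⟩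
        · exact absurd hqW not_false
        · exact ⟨k, hqW, rfl⟩
      have : ℓ ≤ SY.ncard := by
        calc ℓ ≤ _ := hp
          _ ≤ ((fun k => HVert.gad (.yb k v j) .h) '' SY).ncard :=
            Set.ncard_le_ncard hsub (Set.toFinite _)
          _ = SY.ncard :=
            Set.ncard_image_of_injective _ (fun a b hab => by simpa using hab)
      omega
  | gad D w =>
      by_cases hD : tailOK Act SX SY D
      · exact hD
      · exfalso
        cases w with
        | t =>
            have hsub : (graphH G ℓ d).neighborSet (.gad D .t) ∩ Wset Act SX SY ⊆
                (∅ : Set (HVert V ℓ d)) := by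
              rintro q ⟨hq, hqW⟩
              rcases adj_t_inv G hq with rfl | rfl | rfl
              · exact absurd (mem_Wset_gadTail.mp hqW) hD
              · exact absurd hqW hD
              · exact absurd hqW hD
            have := hp.trans (Set.ncard_le_ncard hsub (Set.toFinite _))
            simp [tauH] at this
        | b1 =>
            have hsub : (graphH G ℓ d).neighborSet (.gad D .b1) ∩ Wset Act SX SY ⊆
                (∅ : Set (HVert V ℓ d)) := by
              rintro q ⟨hq, hqW⟩
              rcases adj_b1_inv G hq with rfl | rfl
              · exact absurd hqW hD
              · exact absurd hqW hD
            have := hp.trans (Set.ncard_le_ncard hsub (Set.toFinite _))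
            simp [tauH] at this
        | b2 =>
            have hsub : (graphH G ℓ d).neighborSet (.gad D .b2) ∩ Wset Act SX SY ⊆
                (∅ : Set (HVert V ℓ d)) := by
              rintro q ⟨hq, hqW⟩
              rcases adj_b2_inv G hq with rfl | rfl
              · exact absurd hqW hD
              · exact absurd hqW hD
            have := hp.trans (Set.ncard_le_ncard hsub (Set.toFinite _))
            simp [tauH] at this
        | h =>
            have hsub : (graphH G ℓ d).neighborSet (.gad D .h) ∩ Wset Act SX SY ⊆
                {gadHead D} := by
              rintro q ⟨hq, hqW⟩
              rcases adj_h_inv G hq with rfl | rfl | rfl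
              · rfl
              · exact absurd hqW hD
              · exact absurd hqW hD
            have := hp.trans (Set.ncard_le_ncard hsub (Set.toFinite _))
            simp [tauH, Set.ncard_singleton] at this

section Fire
variable [Fintype V] (G : SimpleGraph V) (τ : V → ℕ) (S : Set (HVert V ℓ d))

local notation "HH" => graphH G ℓ d
local notation "TT" => tauH τ (Fintype.card V) ℓ d
local notation "AA" => activeAt (graphH G ℓ d) (tauH τ (Fintype.card V) ℓ d) S

lemma t_fire {i : ℕ} {D : GadIdx V ℓ d} (h : gadTail D ∈ AA i) :
    HVert.gad D .t ∈ AA (i + 1) := by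
  apply mem_activeAt_succ_of_subset (F := {gadTail D})
  · rintro q rfl
    exact ⟨(adj_tail_t G D).symm, h⟩
  · simp [tauH]

lemma b1_fire {i : ℕ} {D : GadIdx V ℓ d} (h : HVert.gad D .t ∈ AA i) :
    HVert.gad D .b1 ∈ AA (i + 1) := by
  apply mem_activeAt_succ_of_subset (F := {HVert.gad D GadVert.t})
  · rintro q rfl
    exact ⟨(adj_t_b1 G D).symm, h⟩
  · simp [tauH]

lemma b2_fire {i : ℕ} {D : GadIdx V ℓ d} (h : HVert.gad D .t ∈ AA i) :
    HVert.gad D .b2 ∈ AA (i + 1) := by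
  apply mem_activeAt_succ_of_subset (F := {HVert.gad D GadVert.t})
  · rintro q rfl
    exact ⟨(adj_t_b2 G D).symm, h⟩
  · simp [tauH]

lemma h_fire {i : ℕ} {D : GadIdx V ℓ d} (h1 : HVert.gad D .b1 ∈ AA i)
    (h2 : HVert.gad D .b2 ∈ AA i) : HVert.gad D .h ∈ AA (i + 1) := by
  apply mem_activeAt_succ_of_subset
    (F := {HVert.gad D GadVert.b1, HVert.gad D GadVert.b2})
  · rintro q (rfl | rfl)
    · exact ⟨adj_h_b1 G D, h1⟩
    · exact ⟨adj_h_b2 G D, h2⟩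
  · rw [Set.ncard_pair (by simp)]
    simp [tauH]

lemma head_fire {i : ℕ} {D : GadIdx V ℓ d} (h : gadTail D ∈ AA i) :
    HVert.gad D .h ∈ AA (i + 3) := by
  have ht := t_fire G τ S h
  exact h_fire G τ S (b1_fire G τ S ht) (b2_fire G τ S ht)

lemma xx_fire {i : ℕ} (h : ∀ v : V, HVert.orig v ∈ AA i) (k : Fin ℓ) :
    HVert.xx k ∈ AA (i + 4) := by
  apply mem_activeAt_succ_of_subset
    (F := (fun v => HVert.gad (.vx v k) .h) '' Set.univ)
  · rintro q ⟨v, -, rfl⟩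
    exact ⟨adj_head_h G (.vx v k), head_fire G τ S (h v)⟩
  · rw [Set.ncard_image_of_injective _ (fun a b hab => by simpa using hab)]
    simp [tauH, Set.ncard_univ]

lemma yy_fire {i : ℕ} (h : ∀ v : V, HVert.orig v ∈ AA i) (k : Fin ℓ) :
    HVert.yy k ∈ AA (i + 4) := by
  apply mem_activeAt_succ_of_subset
    (F := (fun v => HVert.gad (.vy v k) .h) '' Set.univ)
  · rintro q ⟨v, -, rfl⟩
    exact ⟨adj_head_h G (.vy v k), head_fire G τ S (h v)⟩
  · rw [Set.ncard_image_of_injective _ (fun a b hab => by simpa using hab)]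
    simp [tauH, Set.ncard_univ]

lemma aa_fire {i : ℕ} (h : ∀ k : Fin ℓ, HVert.xx k ∈ AA i) (v : V) (j : Fin (d v)) :
    HVert.aa v j ∈ AA (i + 4) := by
  apply mem_activeAt_succ_of_subset
    (F := (fun k => HVert.gad (.xa k v j) .h) '' Set.univ)
  · rintro q ⟨k, -, rfl⟩
    exact ⟨adj_head_h G (.xa k v j), head_fire G τ S (h k)⟩
  · rw [Set.ncard_image_of_injective _ (fun a b hab => by simpa using hab)]
    simp [tauH, Set.ncard_univ]

lemma bb_fire {i : ℕ} (h : ∀ k : Fin ℓ, HVert.yy k ∈ AA i) (v : V) (j : Fin (d v)) :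
    HVert.bb v j ∈ AA (i + 4) := by
  apply mem_activeAt_succ_of_subset
    (F := (fun k => HVert.gad (.yb k v j) .h) '' Set.univ)
  · rintro q ⟨k, -, rfl⟩
    exact ⟨adj_head_h G (.yb k v j), head_fire G τ S (h k)⟩
  · rw [Set.ncard_image_of_injective _ (fun a b hab => by simpa using hab)]
    simp [tauH, Set.ncard_univ]

lemma orig_fire_from_aa {i : ℕ} {v : V} (hτv : τ v ≤ d v)
    (h : ∀ j : Fin (d v), HVert.aa v j ∈ AA i) :
    HVert.orig v ∈ AA (i + 4) := by
  apply mem_activeAt_succ_of_subset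
    (F := (fun j => HVert.gad (.av v j) .h) '' Set.univ)
  · rintro q ⟨j, -, rfl⟩
    exact ⟨adj_head_h G (.av v j), head_fire G τ S (h j)⟩
  · rw [Set.ncard_image_of_injective _ (fun a b hab => by simpa using hab)]
    simpa [tauH, Set.ncard_univ] using hτv

lemma orig_fire_from_bb {i : ℕ} {v : V} (hτv : τ v ≤ d v)
    (h : ∀ j : Fin (d v), HVert.bb v j ∈ AA i) :
    HVert.orig v ∈ AA (i + 4) := by
  apply mem_activeAt_succ_of_subset
    (F := (fun j => HVert.gad (.bv v j) .h) '' Set.univ)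
  · rintro q ⟨j, -, rfl⟩
    exact ⟨adj_head_h G (.bv v j), head_fire G τ S (h j)⟩
  · rw [Set.ncard_image_of_injective _ (fun a b hab => by simpa using hab)]
    simpa [tauH, Set.ncard_univ] using hτv

lemma univ_of_orig {i : ℕ} (h : ∀ v : V, HVert.orig v ∈ AA i) (p : HVert V ℓ d) :
    p ∈ AA (i + 11) := by
  have mono := activeAt_mono (graphH G ℓ d) (tauH τ (Fintype.card V) ℓ d) S
  have hxx := xx_fire G τ S h
  have hyy := yy_fire G τ S h
  have haa := aa_fire G τ S hxx
  have hbb := bb_fire G τ S hyy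
  have htail : ∀ D : GadIdx V ℓ d, gadTail D ∈ AA (i + 8) := by
    intro D
    cases D with
    | vx v k => exact mono (by omega) (h v)
    | xa k v j => exact mono (by omega) (hxx k)
    | av v j => exact haa v j
    | vy v k => exact mono (by omega) (h v)
    | yb k v j => exact mono (by omega) (hyy k)
    | bv v j => exact hbb v j
  cases p with
  | orig v => exact mono (by omega) (h v)
  | xx k => exact mono (by omega) (hxx k)
  | yy k => exact mono (by omega) (hyy k)
  | aa v j => exact mono (by omega) (haa v j)
  | bb v j => exact mono (by omega) (hbb v j)
  | gad D w =>
      have ht := t_fire G τ S (htail D)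
      cases w with
      | t => exact mono (by omega) ht
      | b1 => exact mono (by omega) (b1_fire G τ S ht)
      | b2 => exact mono (by omega) (b2_fire G τ S ht)
      | h => exact h_fire G τ S (b1_fire G τ S ht) (b2_fire G τ S ht)

lemma orig_sim (i : ℕ) :
    ∀ v ∈ activeAt G τ { v : V | HVert.orig v ∈ S } i, HVert.orig v ∈ AA i := by
  induction i with
  | zero => exact fun v hv => hv
  | succ i ih =>
      intro v hv
      rcases hv with hv | hv
      · exact activeAt_mono _ _ _ (Nat.le_succ i) (ih v hv)
      · apply mem_activeAt_succ_of_subset (F := HVert.orig ''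
          (G.neighborSet v ∩ activeAt G τ { v : V | HVert.orig v ∈ S } i))
        · rintro q ⟨u, ⟨hu, hact⟩, rfl⟩
          exact ⟨adj_orig G hu, ih u hact⟩
        · rw [Set.ncard_image_of_injective _ (fun a b hab => by simpa using hab)]
          exact hv

end Fire

end TSS


open TSS in
/-- For any `S ⊆ V ∪ X ∪ Y`, `S` is a target set for `H` iff `X ⊆ S`, or `Y ⊆ S`, or
`S ∩ V` is a target set for `G`. -/
theorem stmt10 {V : Type*} [Fintype V] (G : SimpleGraph V) [DecidableRel G.Adj] (τ : V → ℕ)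
    (ℓ : ℕ) (hℓ : 1 ≤ ℓ) (hiso : ∀ v : V, 0 < G.degree v) (hτ : ∀ v : V, τ v ≤ G.degree v)
    (S : Set (HVert V ℓ (fun v => G.degree v)))
    (hsub : S ⊆ OrigSet V ℓ (fun v => G.degree v) ∪ XSet V ℓ (fun v => G.degree v) ∪ YSet V ℓ (fun v => G.degree v)) :
    IsTargetSet (graphH G ℓ (fun v => G.degree v)) (tauH τ (Fintype.card V) ℓ (fun v => G.degree v)) S ↔
      (XSet V ℓ (fun v => G.degree v) ⊆ S ∨ YSet V ℓ (fun v => G.degree v) ⊆ S ∨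
        IsTargetSet G τ { v : V | HVert.orig v ∈ S }) := by
  classical
  constructor
  · intro hts
    by_cases hX : XSet V ℓ (fun v => G.degree v) ⊆ S
    · exact Or.inl hX
    by_cases hY : YSet V ℓ (fun v => G.degree v) ⊆ S
    · exact Or.inr (Or.inl hY)
    refine Or.inr (Or.inr ?_)
    by_contra hA
    have hSXne : {k : Fin ℓ | HVert.xx (V := V) (d := fun v => G.degree v) k ∈ S} ≠
        Set.univ := by
      intro hc
      exact hX (by rintro p ⟨k, rfl⟩; exact (hc ▸ Set.mem_univ k : _))
    have hSYne : {k : Fin ℓ | HVert.yy (V := V) (d := fun v => G.degree v) k ∈ S} ≠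
        Set.univ := by
      intro hc
      exact hY (by rintro p ⟨k, rfl⟩; exact (hc ▸ Set.mem_univ k : _))
    have hAct : ∀ v, τ v ≤
        (G.neighborSet v ∩ activeSet G τ { v : V | HVert.orig v ∈ S }).ncard →
        v ∈ activeSet G τ { v : V | HVert.orig v ∈ S } :=
      fun v h => activeSet_closed h
    have hinv : ∀ i, activeAt (graphH G ℓ (fun v => G.degree v))
        (tauH τ (Fintype.card V) ℓ (fun v => G.degree v)) S i ⊆
        Wset (activeSet G τ { v : V | HVert.orig v ∈ S })
          {k : Fin ℓ | HVert.xx (V := V) (d := fun v => G.degree v) k ∈ S}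
          {k : Fin ℓ | HVert.yy (V := V) (d := fun v => G.degree v) k ∈ S} := by
      intro i
      induction i with
      | zero =>
          intro p hp
          rcases hsub hp with (⟨v, rfl⟩ | ⟨k, rfl⟩) | ⟨k, rfl⟩
          · exact activeAt_subset_activeSet G τ _ 0 hp
          · exact hp
          · exact hp
      | succ i ih =>
          rintro p (hp | hp)
          · exact ih hp
          · refine Wset_closed G τ _ _ _ hAct hA hSXne hSYne p (le_trans hp ?_)
            exact Set.ncard_le_ncard
              (Set.inter_subset_inter_right _ ih) (Set.toFinite _)
    obtain ⟨x, hx⟩ : ∃ v : V, v ∉ activeSet G τ { v : V | HVert.orig v ∈ S } := by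
      by_contra hc
      push_neg at hc
      exact hA (Set.eq_univ_of_forall hc)
    have hox := Set.eq_univ_iff_forall.mp hts (HVert.orig x)
    obtain ⟨i, hi⟩ := Set.mem_iUnion.mp hox
    exact hx (hinv i hi)
  · rintro (hX | hY | hts)
    · have h0 : ∀ k : Fin ℓ, HVert.xx k ∈ activeAt (graphH G ℓ (fun v => G.degree v))
          (tauH τ (Fintype.card V) ℓ (fun v => G.degree v)) S 0 :=
        fun k => hX ⟨k, rfl⟩
      have haa := aa_fire G τ S h0
      have horig : ∀ v : V, HVert.orig v ∈ activeAt (graphH G ℓ (fun v => G.degree v))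
          (tauH τ (Fintype.card V) ℓ (fun v => G.degree v)) S 8 :=
        fun v => orig_fire_from_aa G τ S (hτ v) (fun j => haa v j)
      exact Set.eq_univ_of_forall fun p =>
        activeAt_subset_activeSet _ _ _ 19 (univ_of_orig G τ S horig p)
    · have h0 : ∀ k : Fin ℓ, HVert.yy k ∈ activeAt (graphH G ℓ (fun v => G.degree v))
          (tauH τ (Fintype.card V) ℓ (fun v => G.degree v)) S 0 :=
        fun k => hY ⟨k, rfl⟩
      have hbb := bb_fire G τ S h0
      have horig : ∀ v : V, HVert.orig v ∈ activeAt (graphH G ℓ (fun v => G.degree v))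
          (tauH τ (Fintype.card V) ℓ (fun v => G.degree v)) S 8 :=
        fun v => orig_fire_from_bb G τ S (hτ v) (fun j => hbb v j)
      exact Set.eq_univ_of_forall fun p =>
        activeAt_subset_activeSet _ _ _ 19 (univ_of_orig G τ S horig p)
    · obtain ⟨i, hi⟩ := target_exists_stage hts
      have horig : ∀ v : V, HVert.orig v ∈ activeAt (graphH G ℓ (fun v => G.degree v))
          (tauH τ (Fintype.card V) ℓ (fun v => G.degree v)) S i :=
        fun v => orig_sim G τ S i v (hi v)
      exact Set.eq_univ_of_forall fun p =>
        activeAt_subset_activeSet _ _ _ (i + 11) (univ_of_orig G τ S horig p)
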